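/- arXiv:2402.13841 — 5 statements merged into one kernel-verified Lean document; each statement's English description precedes it below -/
import Mathlib

section
/- For every real p with 0 < p ≤ 1, the function d ↦ (1 - p/d)^(d-1) is strictly monotone decreasing on the positive integers; i.e., for all natural numbers d ≥ 1, (1 - p/(d+1))^d < (1 - p/d)^(d-1). -/
/-- For `0 < p ≤ 1`, the map `d ↦ (1 - p/d)^(d-1)` is strictly decreasing on positive integers. -/
theorem monotone_decreasing_one_sub_div_pow_pred
    (p : ℝ) (hp0 : 0 < p) (hp1 : p ≤ 1) :
    ∀ d : ℕ, 1 ≤ d → (1 - p / (d + 1 : ℕ)) ^ d < (1 - p / d) ^ (d - 1) := by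
  intro d hd
  obtain ⟨n, rfl⟩ : ∃ n, d = n + 1 := ⟨d - 1, by omega⟩
  rcases Nat.eq_zero_or_pos n with rfl | hn
  · norm_num
    linarith
  · have hN : (1:ℝ) ≤ (n:ℝ) := by exact_mod_cast hn
    set N := (n:ℝ) with hNdef
    have h2 : ((n + 1 + 1 : ℕ) : ℝ) = N + 2 := by push_cast; ring
    have h1 : ((n + 1 : ℕ) : ℝ) = N + 1 := by push_cast; ring
    rw [h2, h1, Nat.add_sub_cancel]
    set a := 1 - p / (N + 2) with ha_def
    set b := 1 - p / (N + 1) with hb_def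
    clear_value a b
    have hN2 : (0:ℝ) < N + 2 := by linarith
    have hN1 : (0:ℝ) < N + 1 := by linarith
    have hv : p / (N + 2) * (N + 2) = p := div_mul_cancel₀ _ (ne_of_gt hN2)
    have hu : p / (N + 1) * (N + 1) = p := div_mul_cancel₀ _ (ne_of_gt hN1)
    have hvpos : 0 < p / (N + 2) := div_pos hp0 hN2
    have hupos : 0 < p / (N + 1) := div_pos hp0 hN1
    have ha : 0 < a := by
      have : p / (N + 2) < 1 := by rw [div_lt_one hN2]; linarith
      rw [ha_def]; linarith
    have hb : 0 < b := by
      have : p / (N + 1) < 1 := by rw [div_lt_one hN1]; linarith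
      rw [hb_def]; linarith
    have hx : (-2:ℝ) ≤ b / a - 1 := by
      have : 0 < b / a := div_pos hb ha
      linarith
    have hbern : 1 + (N:ℝ) * (b / a - 1) ≤ (b / a) ^ n := by
      have := one_add_mul_le_pow hx n
      simpa using this
    have hkey : a < 1 + N * (b / a - 1) := by
      rw [show 1 + N * (b / a - 1) = (a + N * (b - a)) / a by field_simp]
      rw [lt_div_iff₀ ha]
      have hv'' : (1 - a) * (N + 2) = p := by rw [ha_def]; field_simp; ring
      have hu'' : (1 - b) * (N + 1) = p := by rw [hb_def]; field_simp; ring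
      have h3 : (0:ℝ) < (N + 2) - p * (N + 1) := by nlinarith
      have h4 : N < a * (N + 1) := by nlinarith [hv'', h3, hN2]
      have e1 : a * (1 - a) * ((N + 1) * (N + 2)) = p * (a * (N + 1)) := by
        linear_combination (a * (N + 1)) * hv''
      have e2 : N * (a - b) * ((N + 1) * (N + 2)) = N * p := by
        linear_combination (N * (N + 2)) * hu'' - (N * (N + 1)) * hv''
      have h5 : 0 < (a + N * (b - a) - a * a) * ((N + 1) * (N + 2)) := by
        have he : (a + N * (b - a) - a * a) * ((N + 1) * (N + 2))
            = p * (a * (N + 1)) - N * p := by linear_combination e1 - e2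
        rw [he]
        linarith [mul_pos hp0 (sub_pos.2 h4)]
      nlinarith [h5, mul_pos hN1 hN2]
    have hlt : a < (b / a) ^ n := lt_of_lt_of_le hkey hbern
    calc a ^ (n + 1) = a * a ^ n := by ring
      _ < (b / a) ^ n * a ^ n := by
          exact mul_lt_mul_of_pos_right hlt (pow_pos ha n)
      _ = b ^ n := by rw [← mul_pow, div_mul_cancel₀ _ (ne_of_gt ha)]
end

section
/- For every real p with 0 < p < 1, the function d ↦ (1 - p/(d-1))^d is strictly monotone increasing for integers d ≥ 2; i.e., for all natural numbers d ≥ 2, (1 - p/(d-1))^d < (1 - p/d)^(d+1). -/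
/-- For `0 < p < 1`, the map `d ↦ (1 - p/(d-1))^d` is strictly increasing for integers `d ≥ 2`. -/
theorem monotone_increasing_one_sub_div_pred_pow
    (p : ℝ) (hp0 : 0 < p) (hp1 : p < 1) :
    ∀ d : ℕ, 2 ≤ d → (1 - p / ((d : ℝ) - 1)) ^ d < (1 - p / (d : ℝ)) ^ (d + 1) := by
  intro d hd
  have hD : (2:ℝ) ≤ (d:ℝ) := by exact_mod_cast hd
  set D : ℝ := (d:ℝ) with hDdef
  have hD1 : 0 < D - 1 := by linarith
  have hDp : 0 < D - p := by linarith
  have hD0 : 0 < D := by linarith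
  set t : ℝ := p / ((D-1)*(D-p)) with ht
  have hden : 0 < (D-1)*(D-p) := mul_pos hD1 hDp
  have ht0 : 0 < t := div_pos hp0 hden
  have htp : p < (D-1)*(D-p) := by nlinarith
  have ht1 : t < 1 := (div_lt_one hden).2 htp
  have hb : 0 < 1 - p / D := by
    rw [sub_pos, div_lt_one hD0]; linarith
  have ha : 1 - p/(D-1) = (1 - p/D) * (1 - t) := by
    rw [ht]
    field_simp
    ring
  have hbern : 1 + (d:ℝ) * t ≤ (1+t)^d := one_add_mul_le_pow (by linarith) d
  have h1 : (1-t)^d * (1+t)^d ≤ 1 := by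
    rw [← mul_pow]
    have h : (1-t)*(1+t) = 1 - t^2 := by ring
    rw [h]
    exact pow_le_one₀ (by nlinarith) (by nlinarith)
  have hdt : 1 < (1 - p/D) * (1 + D * t) := by
    have h : (1 - p/D) * (1 + D * t) = 1 - p/D + p/(D-1) := by
      rw [ht]; field_simp
    rw [h]
    have h2 : p/D < p/(D-1) := by
      apply div_lt_div_of_pos_left hp0 hD1 (by linarith)
    linarith
  have hkey : (1-t)^d < 1 - p/D := by
    have h2 : (1-t)^d * (1 + D*t) ≤ 1 := by
      calc (1-t)^d * (1 + D*t) ≤ (1-t)^d * (1+t)^d :=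
            mul_le_mul_of_nonneg_left hbern (pow_nonneg (by linarith) d)
        _ ≤ 1 := h1
    have hpos : 0 < 1 + D*t := by positivity
    have h3 : (1-t)^d * (1 + D*t) < (1 - p/D) * (1 + D*t) := lt_of_le_of_lt h2 hdt
    exact lt_of_mul_lt_mul_right h3 (le_of_lt hpos)
  calc (1 - p/(D-1))^d = (1-p/D)^d * (1-t)^d := by rw [ha, mul_pow]
    _ < (1-p/D)^d * (1-p/D) := mul_lt_mul_of_pos_left hkey (pow_pos hb d)
    _ = (1-p/D)^(d+1) := by rw [pow_succ]
end

section
/- For all reals p ∈ (0,1) and d ≥ 0, the second derivative with respect to d of the function f(d) = (1 - p/(d+1))^d is strictly positive; in particular f is strictly convex on [0, ∞). -/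
open Real Filter Set

noncomputable def auxG1 (p x : ℝ) : ℝ :=
  Real.log (1 - p / (x + 1)) + x * p / ((x + 1) * (x + 1 - p))

noncomputable def auxF1 (p x : ℝ) : ℝ :=
  Real.exp (x * Real.log (1 - p / (x + 1))) * auxG1 p x

noncomputable def auxG2 (p x : ℝ) : ℝ :=
  p * ((2 - p) * x + 2 * (1 - p)) / ((x + 1) * (x + 1 - p)) ^ 2

noncomputable def auxF2 (p x : ℝ) : ℝ :=
  Real.exp (x * Real.log (1 - p / (x + 1))) * ((auxG1 p x) ^ 2 + auxG2 p x)

lemma aux_hasDerivAt (p : ℝ) (hp0 : 0 < p) (hp1 : p < 1) (x : ℝ) (hx : p - 1 < x) :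
    HasDerivAt (fun y : ℝ => Real.exp (y * Real.log (1 - p / (y + 1)))) (auxF1 p x) x ∧
    HasDerivAt (auxF1 p) (auxF2 p x) x := by
  have h1 : (0:ℝ) < x + 1 := by linarith
  have h2 : (0:ℝ) < x + 1 - p := by linarith
  have h1' : (x:ℝ) + 1 ≠ 0 := h1.ne'
  have h2' : (x:ℝ) + 1 - p ≠ 0 := h2.ne'
  have hurw : 1 - p / (x + 1) = (x + 1 - p) / (x + 1) := by field_simp
  have hu : 0 < 1 - p / (x + 1) := by rw [hurw]; positivity
  -- derivative of x + 1
  have hd1 : HasDerivAt (fun y : ℝ => y + 1) 1 x := by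
    simpa using (hasDerivAt_id x).add_const 1
  -- derivative of p / (x+1)
  have hd2 : HasDerivAt (fun y : ℝ => p / (y + 1))
      ((0 * (x + 1) - p * 1) / (x + 1) ^ 2) x :=
    (hasDerivAt_const x p).div hd1 h1'
  -- derivative of 1 - p/(x+1)
  have hu' : HasDerivAt (fun y : ℝ => 1 - p / (y + 1)) (p / (x + 1) ^ 2) x := by
    have := (hasDerivAt_const x (1:ℝ)).sub hd2
    refine this.congr_deriv ?_
    field_simp
    ring
  -- derivative of log (1 - p/(x+1))
  have hlog : HasDerivAt (fun y : ℝ => Real.log (1 - p / (y + 1)))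
      (p / (x + 1) ^ 2 / (1 - p / (x + 1))) x := hu'.log hu.ne'
  have hlogval : p / (x + 1) ^ 2 / (1 - p / (x + 1)) = p / ((x + 1) * (x + 1 - p)) := by
    rw [hurw]; field_simp
  -- derivative of g : y ↦ y * log(1 - p/(y+1))
  have hg : HasDerivAt (fun y : ℝ => y * Real.log (1 - p / (y + 1))) (auxG1 p x) x := by
    have := (hasDerivAt_id x).mul hlog
    refine this.congr_deriv ?_
    rw [hlogval]
    unfold auxG1
    simp only [id_eq]
    ring
  have hF : HasDerivAt (fun y : ℝ => Real.exp (y * Real.log (1 - p / (y + 1))))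
      (auxF1 p x) x := by
    have := hg.exp
    convert this using 1
    rfl
  -- derivative of second term of auxG1
  have hden : HasDerivAt (fun y : ℝ => (y + 1) * (y + 1 - p))
      (1 * (x + 1 - p) + (x + 1) * 1) x := hd1.mul (hd1.sub_const p)
  have hnum : HasDerivAt (fun y : ℝ => y * p) p x := by
    simpa using (hasDerivAt_id x).mul_const p
  have hdenne : (x + 1) * (x + 1 - p) ≠ 0 := by positivity
  have hB : HasDerivAt (fun y : ℝ => y * p / ((y + 1) * (y + 1 - p)))
      ((p * ((x + 1) * (x + 1 - p)) - x * p * (1 * (x + 1 - p) + (x + 1) * 1)) /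
        ((x + 1) * (x + 1 - p)) ^ 2) x := hnum.div hden hdenne
  have hg1 : HasDerivAt (auxG1 p) (auxG2 p x) x := by
    have := hlog.add hB
    have heq : p / (x + 1) ^ 2 / (1 - p / (x + 1)) +
        (p * ((x + 1) * (x + 1 - p)) - x * p * (1 * (x + 1 - p) + (x + 1) * 1)) /
          ((x + 1) * (x + 1 - p)) ^ 2 = auxG2 p x := by
      rw [hlogval]
      unfold auxG2
      field_simp
      ring
    rw [← heq]
    exact this
  refine ⟨hF, ?_⟩
  have := hF.mul hg1
  refine this.congr_deriv ?_
  unfold auxF2 auxF1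
  ring

/-- For `0 < p < 1`, the function `f(d) = (1 - p/(d+1))^d` (real exponent) has strictly
positive second derivative on `[0, ∞)`, and in particular is strictly convex there. -/
theorem second_deriv_pos_and_strictConvex
    (p : ℝ) (hp0 : 0 < p) (hp1 : p < 1) :
    (∀ d : ℝ, 0 ≤ d →
      0 < iteratedDeriv 2 (fun x : ℝ => (1 - p / (x + 1)) ^ x) d) ∧
    StrictConvexOn ℝ (Set.Ici (0 : ℝ)) (fun x : ℝ => (1 - p / (x + 1)) ^ x) := by
  set f : ℝ → ℝ := fun x => (1 - p / (x + 1)) ^ x with hfdef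
  have hfeq : ∀ x ∈ Ioi (p - 1), f x = Real.exp (x * Real.log (1 - p / (x + 1))) := by
    intro x hx
    have h1 : (0:ℝ) < x + 1 := by simp only [mem_Ioi] at hx; linarith
    have hurw : 1 - p / (x + 1) = (x + 1 - p) / (x + 1) := by field_simp
    have hu : 0 < 1 - p / (x + 1) := by
      rw [hurw]
      have h2 : (0:ℝ) < x + 1 - p := by simp only [mem_Ioi] at hx; linarith
      positivity
    rw [hfdef]
    simp only
    rw [Real.rpow_def_of_pos hu, mul_comm]
  have hSopen : IsOpen (Ioi (p - 1)) := isOpen_Ioi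
  -- f has derivative auxF1 on S
  have hdf : ∀ x ∈ Ioi (p - 1), HasDerivAt f (auxF1 p x) x := by
    intro x hx
    have hev : f =ᶠ[nhds x] fun y => Real.exp (y * Real.log (1 - p / (y + 1))) :=
      Filter.eventuallyEq_of_mem (hSopen.mem_nhds hx) hfeq
    exact ((aux_hasDerivAt p hp0 hp1 x hx).1).congr_of_eventuallyEq hev
  -- deriv f = auxF1 near points of S, so second deriv is auxF2
  have hd2f : ∀ x ∈ Ioi (p - 1), deriv (deriv f) x = auxF2 p x := by
    intro x hx
    have hev : deriv f =ᶠ[nhds x] auxF1 p :=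
      Filter.eventuallyEq_of_mem (hSopen.mem_nhds hx) (fun y hy => (hdf y hy).deriv)
    rw [hev.deriv_eq, ((aux_hasDerivAt p hp0 hp1 x hx).2).deriv]
  have hmem : ∀ d : ℝ, 0 ≤ d → d ∈ Ioi (p - 1) := by
    intro d hd; simp only [mem_Ioi]; linarith
  have hpos : ∀ d : ℝ, 0 ≤ d → 0 < auxF2 p d := by
    intro d hd
    have h1 : (0:ℝ) < d + 1 := by linarith
    have h2 : (0:ℝ) < d + 1 - p := by linarith
    unfold auxF2 auxG2
    have hG2 : 0 < p * ((2 - p) * d + 2 * (1 - p)) / ((d + 1) * (d + 1 - p)) ^ 2 := by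
      apply div_pos
      · have : 0 ≤ (2 - p) * d := by nlinarith
        nlinarith
      · positivity
    have hsq : 0 ≤ (auxG1 p d) ^ 2 := sq_nonneg _
    positivity
  have hiter : ∀ d : ℝ, 0 ≤ d → 0 < iteratedDeriv 2 f d := by
    intro d hd
    rw [iteratedDeriv_succ, iteratedDeriv_one]
    rw [hd2f d (hmem d hd)]
    exact hpos d hd
  refine ⟨hiter, ?_⟩
  apply strictConvexOn_of_deriv2_pos (convex_Ici 0)
  · intro x hx
    exact ((hdf x (hmem x hx)).continuousAt).continuousWithinAt
  · intro x hx
    rw [interior_Ici] at hx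
    have hx' : (0:ℝ) ≤ x := le_of_lt hx
    have := hiter x hx'
    rwa [iteratedDeriv_succ, iteratedDeriv_one] at this
end

section
/- For every real p with 0 < p < 1, the union over positive integers d of the closed intervals [ (1/(d+1))·(1 - p/d)^d , (1/d)·(1 - p/d)^(d-1) ] equals the half-open interval (0, 1]. In particular, consecutive intervals overlap: for every d ≥ 1, (1/(d+1))·(1 - p/d)^d < (1/(d+1))·(1 - p/(d+1))^d, and the left endpoints tend to 0 as d → ∞, while the right endpoint for d = 1 equals 1. -/
open Filter

/-- Left endpoint of the `d`-regular equilibrium interval. -/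
noncomputable def leftEnd (p : ℝ) (d : ℕ) : ℝ := (1 / ((d : ℝ) + 1)) * (1 - p / d) ^ d

/-- Right endpoint of the `d`-regular equilibrium interval. -/
noncomputable def rightEnd (p : ℝ) (d : ℕ) : ℝ := (1 / (d : ℝ)) * (1 - p / d) ^ (d - 1)

lemma aux_base_pos {p : ℝ} (hp0 : 0 < p) (hp1 : p < 1) {d : ℕ} (hd : 1 ≤ d) :
    0 < 1 - p / (d : ℝ) := by
  have hd1 : (1:ℝ) ≤ (d:ℝ) := by exact_mod_cast hd
  have h1 : p / (d:ℝ) ≤ p := div_le_self hp0.le hd1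
  linarith

lemma aux_left_pos {p : ℝ} (hp0 : 0 < p) (hp1 : p < 1) (d : ℕ) (hd : 1 ≤ d) :
    0 < leftEnd p d := by
  have hb := aux_base_pos hp0 hp1 hd
  have hd0 : (0:ℝ) < (d:ℝ) + 1 := by positivity
  unfold leftEnd
  positivity

lemma aux_right_eq (p : ℝ) (d : ℕ) :
    rightEnd p (d + 1) = (1 / ((d : ℝ) + 1)) * (1 - p / ((d : ℝ) + 1)) ^ d := by
  unfold rightEnd
  push_cast
  norm_num

lemma aux_right_le {p : ℝ} (hp0 : 0 < p) (hp1 : p < 1) (d : ℕ) :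
    rightEnd p (d + 1) ≤ 1 / ((d : ℝ) + 1) := by
  rw [aux_right_eq]
  have hb : 0 < 1 - p / ((d:ℝ) + 1) := by
    have := aux_base_pos hp0 hp1 (d := d + 1) (by omega)
    push_cast at this ⊢
    linarith
  have hb1 : 1 - p / ((d:ℝ) + 1) ≤ 1 := by
    have : 0 ≤ p / ((d:ℝ) + 1) := by positivity
    linarith
  have hpow : (1 - p / ((d:ℝ) + 1)) ^ d ≤ 1 := pow_le_one₀ hb.le hb1
  have h0 : (0:ℝ) ≤ 1 / ((d:ℝ) + 1) := by positivity
  calc (1 / ((d : ℝ) + 1)) * (1 - p / ((d : ℝ) + 1)) ^ d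
      ≤ (1 / ((d : ℝ) + 1)) * 1 := by
        apply mul_le_mul_of_nonneg_left hpow h0
    _ = 1 / ((d : ℝ) + 1) := by ring

lemma aux_overlap {p : ℝ} (hp0 : 0 < p) (hp1 : p < 1) (d : ℕ) (hd : 1 ≤ d) :
    leftEnd p d < (1 / ((d : ℝ) + 1)) * (1 - p / ((d : ℝ) + 1)) ^ d := by
  have hd0 : (0:ℝ) < (d:ℝ) := by exact_mod_cast hd
  have hb := aux_base_pos hp0 hp1 hd
  have hlt : p / ((d:ℝ) + 1) < p / (d:ℝ) :=
    div_lt_div_of_pos_left hp0 hd0 (by linarith)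
  have hbase : 1 - p / (d:ℝ) < 1 - p / ((d:ℝ) + 1) := by linarith
  have hpow : (1 - p / (d:ℝ)) ^ d < (1 - p / ((d:ℝ) + 1)) ^ d :=
    pow_lt_pow_left₀ hbase hb.le (by omega)
  have hpos : (0:ℝ) < 1 / ((d:ℝ) + 1) := by positivity
  unfold leftEnd
  exact mul_lt_mul_of_pos_left hpow hpos

lemma aux_left_le {p : ℝ} (hp0 : 0 < p) (hp1 : p < 1) (d : ℕ) :
    leftEnd p (d + 1) ≤ 1 / ((d : ℝ) + 1) := by
  have hb : 0 < 1 - p / ((d:ℝ) + 1) := by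
    have := aux_base_pos hp0 hp1 (d := d + 1) (by omega)
    push_cast at this ⊢
    linarith
  have hb1 : 1 - p / ((d:ℝ) + 1) ≤ 1 := by
    have : 0 ≤ p / ((d:ℝ) + 1) := by positivity
    linarith
  have hpow : (1 - p / ((d:ℝ) + 1)) ^ (d + 1) ≤ 1 := pow_le_one₀ hb.le hb1
  unfold leftEnd
  push_cast
  have h0 : (0:ℝ) < 1 / ((d:ℝ) + 1 + 1) := by positivity
  calc (1 / ((d:ℝ) + 1 + 1)) * (1 - p / ((d:ℝ) + 1)) ^ (d + 1)
      ≤ (1 / ((d:ℝ) + 1 + 1)) * 1 := mul_le_mul_of_nonneg_left hpow h0.le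
    _ = 1 / ((d:ℝ) + 1 + 1) := by ring
    _ ≤ 1 / ((d:ℝ) + 1) := by
        apply one_div_le_one_div_of_le (by positivity)
        linarith

lemma aux_right_one (p : ℝ) : rightEnd p 1 = 1 := by
  norm_num [rightEnd]

/-- For `0 < p < 1`, the union over positive integers `d` of the intervals
`[ (1/(d+1))(1-p/d)^d , (1/d)(1-p/d)^(d-1) ]` equals `(0, 1]`; consecutive intervals
overlap, the left endpoints tend to `0`, and the right endpoint for `d = 1` equals `1`. -/
theorem equilibrium_intervals_cover
    (p : ℝ) (hp0 : 0 < p) (hp1 : p < 1) :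
    (⋃ d : ℕ, Set.Icc (leftEnd p (d + 1)) (rightEnd p (d + 1))) = Set.Ioc (0 : ℝ) 1 ∧
    (∀ d : ℕ, 1 ≤ d →
      leftEnd p d < (1 / ((d : ℝ) + 1)) * (1 - p / ((d : ℝ) + 1)) ^ d) ∧
    Tendsto (fun d : ℕ => leftEnd p (d + 1)) atTop (nhds 0) ∧
    rightEnd p 1 = 1 := by
  classical
  refine ⟨?_, fun d hd => aux_overlap hp0 hp1 d hd, ?_, aux_right_one p⟩
  · ext x
    simp only [Set.mem_iUnion, Set.mem_Icc, Set.mem_Ioc]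
    constructor
    · rintro ⟨d, h1, h2⟩
      have hL := aux_left_pos hp0 hp1 (d + 1) (by omega)
      have hR : rightEnd p (d + 1) ≤ 1 := by
        have := aux_right_le hp0 hp1 d
        have h1d : 1 / ((d:ℝ) + 1) ≤ 1 := by
          rw [div_le_one (by positivity)]
          have : (0:ℝ) ≤ (d:ℝ) := Nat.cast_nonneg d
          linarith
        linarith
      exact ⟨lt_of_lt_of_le hL h1, le_trans h2 hR⟩
    · rintro ⟨hx0, hx1⟩
      obtain ⟨N, hN⟩ := exists_nat_one_div_lt hx0
      set P : ℕ → Prop := fun d => x ≤ rightEnd p (d + 1) with hP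
      have hP0 : P 0 := by
        simpa [hP, aux_right_one] using hx1
      set d₀ := Nat.findGreatest P N with hd₀
      have hPd₀ : P d₀ := Nat.findGreatest_spec (Nat.zero_le N) hP0
      have hd₀N : d₀ < N := by
        rcases lt_or_eq_of_le (Nat.findGreatest_le (P := P) N) with h | h
        · exact h
        · exfalso
          have hx : x ≤ rightEnd p (N + 1) := by rw [← h]; exact hPd₀
          have := aux_right_le hp0 hp1 N
          linarith
      have hnot : ¬ P (d₀ + 1) :=
        Nat.findGreatest_is_greatest (Nat.lt_succ_self d₀) (by omega)
      have hlt : rightEnd p (d₀ + 2) < x := by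
        have : ¬ x ≤ rightEnd p (d₀ + 1 + 1) := hnot
        push_neg at this
        simpa using this
      have hov := aux_overlap hp0 hp1 (d₀ + 1) (by omega)
      have heq : rightEnd p (d₀ + 2) =
          (1 / (((d₀ + 1 : ℕ) : ℝ) + 1)) * (1 - p / (((d₀ + 1 : ℕ) : ℝ) + 1)) ^ (d₀ + 1) := by
        have := aux_right_eq p (d₀ + 1)
        simpa using this
      refine ⟨d₀, ?_, hPd₀⟩
      have : leftEnd p (d₀ + 1) < rightEnd p (d₀ + 2) := by rw [heq]; exact hov
      linarith
  · apply squeeze_zero (fun n => (aux_left_pos hp0 hp1 (n + 1) (by omega)).le)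
      (fun n => aux_left_le hp0 hp1 n)
    exact tendsto_one_div_add_atTop_nhds_zero_nat
end

section
/- Let u_1 ≤ u_2 ≤ ... ≤ u_n be reals with 0 < a ≤ u_i ≤ b for all i. Then the Gini coefficient Gini(u) = (Σ_{i,j} |u_i - u_j|) / (2n·Σ_i u_i) is at most max over λ ∈ [0,1] of λ(1-λ)(b-a)/(λb + (1-λ)a); i.e., it is maximized (over all such vectors u) by vectors whose entries take only the values a and b. -/
open Finset

/-- The Gini coefficient of a nondecreasing vector with entries in `[a,b]`, `a > 0`, is at
most the maximum over `λ ∈ [0,1]` of `λ(1-λ)(b-a)/(λb + (1-λ)a)`. -/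
theorem gini_upper_bound
    (n : ℕ) (hn : 1 ≤ n) (a b : ℝ) (ha : 0 < a) (hab : a ≤ b)
    (u : Fin n → ℝ) (hmono : Monotone u)
    (hbounds : ∀ i, a ≤ u i ∧ u i ≤ b) :
    (∑ i, ∑ j, |u i - u j|) / (2 * n * ∑ i, u i) ≤
      sSup ((fun l : ℝ => l * (1 - l) * (b - a) / (l * b + (1 - l) * a)) ''
        Set.Icc 0 1) := by
  have hn0 : (0:ℝ) < n := by positivity
  set S := ∑ i, ∑ j, |u i - u j| with hS
  set T := ∑ i, u i with hT
  have hTa : (n:ℝ) * a ≤ T := by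
    calc (n:ℝ) * a = ∑ _i : Fin n, a := by simp [mul_comm]
    _ ≤ T := Finset.sum_le_sum fun i _ => (hbounds i).1
  have hTb : T ≤ (n:ℝ) * b := by
    calc T ≤ ∑ _i : Fin n, b := Finset.sum_le_sum fun i _ => (hbounds i).2
    _ = (n:ℝ) * b := by simp [mul_comm]
  have hT0 : 0 < T := lt_of_lt_of_le (by positivity) hTa
  have hbdd : BddAbove ((fun l : ℝ => l * (1 - l) * (b - a) / (l * b + (1 - l) * a)) ''
      Set.Icc 0 1) := by
    refine ⟨(b - a) / a, ?_⟩
    rintro y ⟨l, ⟨hl0, hl1⟩, rfl⟩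
    have hden : a ≤ l * b + (1 - l) * a := by nlinarith
    have hnum : l * (1 - l) * (b - a) ≤ b - a := by nlinarith
    exact div_le_div₀ (by linarith) hnum ha hden
  rcases eq_or_lt_of_le hab with heq | hlt
  · -- a = b : everything is equal, Gini = 0
    have hS0 : S = 0 := by
      rw [hS]
      apply Finset.sum_eq_zero
      intro i _
      apply Finset.sum_eq_zero
      intro j _
      have h1 := hbounds i
      have h2 := hbounds j
      have : u i = u j := by rw [← heq] at h1 h2; linarith [h1.1, h1.2, h2.1, h2.2]
      simp [this]
    rw [hS0, zero_div]
    have hmem : (0:ℝ) ∈ ((fun l : ℝ => l * (1 - l) * (b - a) / (l * b + (1 - l) * a)) ''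
        Set.Icc 0 1) := by
      refine ⟨0, ⟨le_refl 0, zero_le_one⟩, ?_⟩
      simp
    exact le_csSup hbdd hmem
  · -- a < b
    have hba : (0:ℝ) < b - a := by linarith
    have key : ∀ x y : ℝ, a ≤ x → x ≤ b → a ≤ y → y ≤ b →
        |x - y| * (b - a) ≤ (b - x) * (y - a) + (b - y) * (x - a) := by
      intro x y hx1 hx2 hy1 hy2
      rcases abs_cases (x - y) with ⟨h, _⟩ | ⟨h, _⟩ <;> rw [h] <;> nlinarith
    have hSsum : S * (b - a) ≤ 2 * (((n:ℝ) * b - T) * (T - (n:ℝ) * a)) := by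
      have h1 : S * (b - a) = ∑ i, ∑ j, |u i - u j| * (b - a) := by
        rw [hS, Finset.sum_mul]
        exact Finset.sum_congr rfl fun i _ => by rw [Finset.sum_mul]
      have h2 : S * (b - a) ≤ ∑ i : Fin n, ∑ j : Fin n,
          ((b - u i) * (u j - a) + (b - u j) * (u i - a)) := by
        rw [h1]
        refine Finset.sum_le_sum fun i _ => Finset.sum_le_sum fun j _ => ?_
        exact key _ _ (hbounds i).1 (hbounds i).2 (hbounds j).1 (hbounds j).2
      have h3 : ∑ i : Fin n, ∑ j : Fin n,
          ((b - u i) * (u j - a) + (b - u j) * (u i - a)) =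
          2 * (((n:ℝ) * b - T) * (T - (n:ℝ) * a)) := by
        have hb' : ∑ i : Fin n, (b - u i) = (n:ℝ) * b - T := by
          rw [Finset.sum_sub_distrib]; simp [hT, mul_comm]
        have ha' : ∑ i : Fin n, (u i - a) = T - (n:ℝ) * a := by
          rw [Finset.sum_sub_distrib]; simp [hT, mul_comm]
        have e1 : ∑ i : Fin n, ∑ j : Fin n, (b - u i) * (u j - a) =
            (∑ i : Fin n, (b - u i)) * (∑ j : Fin n, (u j - a)) := by
          rw [Finset.sum_mul]
          exact Finset.sum_congr rfl fun i _ => by rw [Finset.mul_sum]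
        have e2 : ∑ i : Fin n, ∑ j : Fin n, (b - u j) * (u i - a) =
            (∑ j : Fin n, (b - u j)) * (∑ i : Fin n, (u i - a)) := by
          rw [Finset.sum_comm, Finset.sum_mul]
          exact Finset.sum_congr rfl fun i _ => by rw [Finset.mul_sum]
        calc ∑ i : Fin n, ∑ j : Fin n, ((b - u i) * (u j - a) + (b - u j) * (u i - a))
            = ∑ i : Fin n, ∑ j : Fin n, (b - u i) * (u j - a) +
              ∑ i : Fin n, ∑ j : Fin n, (b - u j) * (u i - a) := by
              simp [Finset.sum_add_distrib]
          _ = 2 * (((n:ℝ) * b - T) * (T - (n:ℝ) * a)) := by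
              rw [e1, e2, hb', ha']; ring
      linarith
    set l : ℝ := (T - (n:ℝ) * a) / ((n:ℝ) * (b - a)) with hl
    have hnba : (0:ℝ) < (n:ℝ) * (b - a) := by positivity
    have hl0 : 0 ≤ l := div_nonneg (by linarith) (le_of_lt hnba)
    have hl1 : l ≤ 1 := by
      rw [hl, div_le_one hnba]; nlinarith
    have hden : l * b + (1 - l) * a = T / n := by
      rw [hl]; field_simp; ring
    have hmem : (T - (n:ℝ) * a) * ((n:ℝ) * b - T) / ((n:ℝ) * (b - a) * T) ∈
        ((fun l : ℝ => l * (1 - l) * (b - a) / (l * b + (1 - l) * a)) '' Set.Icc 0 1) := by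
      refine ⟨l, ⟨hl0, hl1⟩, ?_⟩
      show l * (1 - l) * (b - a) / (l * b + (1 - l) * a) =
        (T - (n:ℝ) * a) * ((n:ℝ) * b - T) / ((n:ℝ) * (b - a) * T)
      rw [hden, hl]
      have hn' : (n:ℝ) ≠ 0 := ne_of_gt hn0
      have hba' : b - a ≠ 0 := ne_of_gt hba
      have hT' : T ≠ 0 := ne_of_gt hT0
      field_simp
      ring
    refine le_trans ?_ (le_csSup hbdd hmem)
    rw [div_le_div_iff₀ (by positivity) (by positivity)]
    nlinarith [mul_le_mul_of_nonneg_left hSsum (le_of_lt (mul_pos hn0 hT0))]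
end
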